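/- Let n ≥ 1 and let a ∈ ℝ^{n+1} be a nonzero vector with ∑_{j=1}^{n+1} a_j = 0. Then the gauge (Minkowski functional) of the difference body DΔ_n = Δ_n − Δ_n evaluated at a, namely g(DΔ_n, a) = inf{ρ > 0 : a ∈ ρ·(Δ_n − Δ_n)}, equals (1/2) ∑_{j=1}^{n+1} |a_j|. -/
import Mathlib


open Finset Pointwise

theorem stmt_9 (n : ℕ) (hn : 1 ≤ n) (a : Fin (n + 1) → ℝ) (ha : a ≠ 0)
    (hsum : ∑ j, a j = 0) :
    gauge
        ({x : Fin (n + 1) → ℝ | (∀ j, 0 ≤ x j) ∧ ∑ j, x j = 1} -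
          {x : Fin (n + 1) → ℝ | (∀ j, 0 ≤ x j) ∧ ∑ j, x j = 1}) a =
      (1 / 2) * ∑ j, |a j| := by
  set S : Set (Fin (n + 1) → ℝ) := {x | (∀ j, 0 ≤ x j) ∧ ∑ j, x j = 1} with hSdef
  set t : ℝ := (1 / 2) * ∑ j, |a j| with ht
  obtain ⟨j0, hj0⟩ : ∃ j, a j ≠ 0 := by
    by_contra h; push_neg at h; exact ha (funext h)
  have habs : 0 < ∑ j, |a j| :=
    Finset.sum_pos' (fun i _ => abs_nonneg _) ⟨j0, Finset.mem_univ _, abs_pos.mpr hj0⟩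
  have htpos : 0 < t := by rw [ht]; linarith
  have hkey : {r : ℝ | 0 < r ∧ a ∈ r • (S - S)} = Set.Ici t := by
    ext r
    simp only [Set.mem_setOf_eq, Set.mem_Ici]
    constructor
    · rintro ⟨hr, x, hx, hxa⟩
      obtain ⟨y, hy, z, hz, hyz⟩ := hx
      have hbound : ∀ j, |a j| ≤ r * (y j + z j) := by
        intro j
        have haj : a j = r * (y j - z j) := by
          rw [← hxa, ← hyz]; simp
        rw [haj, abs_mul, abs_of_pos hr]
        have h1 : |y j - z j| ≤ y j + z j := by
          rw [abs_sub_le_iff]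
          constructor <;> [linarith [hy.1 j, hz.1 j]; linarith [hy.1 j, hz.1 j]]
        nlinarith
      have hsum2 : ∑ j, |a j| ≤ 2 * r := by
        calc ∑ j, |a j| ≤ ∑ j, r * (y j + z j) :=
              Finset.sum_le_sum fun j _ => hbound j
          _ = r * (∑ j, y j + ∑ j, z j) := by
              rw [← Finset.mul_sum, Finset.sum_add_distrib]
          _ = 2 * r := by rw [hy.2, hz.2]; ring
      rw [ht]; linarith
    · intro hr
      have hrpos : 0 < r := lt_of_lt_of_le htpos hr
      have hmax : ∀ x : ℝ, max x 0 = (x + |x|) / 2 := by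
        intro x
        rcases le_total 0 x with h | h
        · rw [max_eq_left h, abs_of_nonneg h]; ring
        · rw [max_eq_right h, abs_of_nonpos h]; ring
      have hmaxn : ∀ x : ℝ, max (-x) 0 = (|x| - x) / 2 := by
        intro x
        rcases le_total 0 x with h | h
        · rw [max_eq_right (neg_nonpos.mpr h), abs_of_nonneg h]; ring
        · rw [max_eq_left (neg_nonneg.mpr h), abs_of_nonpos h]; ring
      set p : Fin (n + 1) → ℝ := fun j => max (a j) 0 with hp
      set q : Fin (n + 1) → ℝ := fun j => max (-(a j)) 0 with hq
      have hsp : ∑ j, p j = t := by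
        rw [ht]
        calc ∑ j, p j = ∑ j, (a j + |a j|) / 2 :=
              Finset.sum_congr rfl fun j _ => hmax (a j)
          _ = ((∑ j, a j) + ∑ j, |a j|) / 2 := by
              rw [← Finset.sum_div, Finset.sum_add_distrib]
          _ = (1 / 2) * ∑ j, |a j| := by rw [hsum]; ring
      have hsq : ∑ j, q j = t := by
        rw [ht]
        calc ∑ j, q j = ∑ j, (|a j| - a j) / 2 :=
              Finset.sum_congr rfl fun j _ => hmaxn (a j)
          _ = ((∑ j, |a j|) - ∑ j, a j) / 2 := by
              rw [← Finset.sum_div, Finset.sum_sub_distrib]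
          _ = (1 / 2) * ∑ j, |a j| := by rw [hsum]; ring
      set c : ℝ := (1 - t / r) / (n + 1) with hc
      have hnpos : (0 : ℝ) < (n : ℝ) + 1 := by positivity
      have hc0 : 0 ≤ c := by
        rw [hc]
        have : t / r ≤ 1 := (div_le_one hrpos).mpr hr
        apply div_nonneg (by linarith) (by linarith)
      set y : Fin (n + 1) → ℝ := fun j => p j / r + c with hy
      set z : Fin (n + 1) → ℝ := fun j => q j / r + c with hz
      have hyS : y ∈ S := by
        constructor
        · intro j
          have : 0 ≤ p j := le_max_right _ _
          positivity
        · rw [hy]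
          simp only
          rw [Finset.sum_add_distrib, ← Finset.sum_div, hsp, Finset.sum_const,
            Finset.card_univ, Fintype.card_fin, nsmul_eq_mul, hc]
          push_cast
          field_simp
          ring
      have hzS : z ∈ S := by
        constructor
        · intro j
          have : 0 ≤ q j := le_max_right _ _
          positivity
        · rw [hz]
          simp only
          rw [Finset.sum_add_distrib, ← Finset.sum_div, hsq, Finset.sum_const,
            Finset.card_univ, Fintype.card_fin, nsmul_eq_mul, hc]
          push_cast
          field_simp
          ring
      refine ⟨hrpos, y - z, Set.sub_mem_sub hyS hzS, ?_⟩
      funext j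
      have hpq : p j - q j = a j := by
        rcases le_total 0 (a j) with h | h
        · rw [hp, hq]; simp only
          rw [max_eq_left h, max_eq_right (neg_nonpos.mpr h)]; ring
        · rw [hp, hq]; simp only
          rw [max_eq_right h, max_eq_left (neg_nonneg.mpr h)]; ring
      have : r * (y j - z j) = a j := by
        rw [hy, hz]
        simp only
        field_simp
        linarith [hpq]
      simpa [Pi.smul_apply, smul_eq_mul] using this
  rw [gauge, hkey, csInf_Ici]
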